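/- arXiv:math/0412346 — 4 statements merged into one kernel-verified Lean document; each statement's English description precedes it below -/
import Mathlib

section
/- Let $F$ be a real random variable with $E[F]=0$ and suppose $E[F e^{sF}] \le h(s)\, E[e^{sF}]$ for all $s\in[0,t_0)$, where $h$ is nonnegative, measurable and locally integrable on $[0,t_0)$, and $E[e^{sF}]<\infty$ for $s\in[0,t_0)$. Then for every $t\in(0,t_0)$ and $x>0$, $P(F\ge x)\le \exp\left(-tx + \int_0^t h(s)\,ds\right)$. -/
open MeasureTheory Real Filter

lemma exp_bound_aux {a b s y : ℝ} (ha : a ≤ s) (hb : s ≤ b) :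
    Real.exp (s * y) ≤ Real.exp (a * y) + Real.exp (b * y) := by
  rcases le_or_gt 0 y with hy | hy
  · have : s * y ≤ b * y := mul_le_mul_of_nonneg_right hb hy
    calc Real.exp (s * y) ≤ Real.exp (b * y) := Real.exp_le_exp.2 this
      _ ≤ _ := le_add_of_nonneg_left (Real.exp_pos _).le
  · have : s * y ≤ a * y := mul_le_mul_of_nonpos_right ha hy.le
    calc Real.exp (s * y) ≤ Real.exp (a * y) := Real.exp_le_exp.2 this
      _ ≤ _ := le_add_of_nonneg_right (Real.exp_pos _).le

/-- Chernoff bound from the differential inequality `E[F e^{sF}] ≤ h(s) E[e^{sF}]`. -/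
theorem stmt1 {Ω : Type*} [MeasurableSpace Ω] (μ : Measure Ω) [IsProbabilityMeasure μ]
    (F : Ω → ℝ) (t0 : ℝ) (h : ℝ → ℝ)
    (hF : Integrable F μ) (hmean : ∫ ω, F ω ∂μ = 0)
    (hnn : ∀ s ∈ Set.Ico (0:ℝ) t0, 0 ≤ h s)
    (hmeas : Measurable h)
    (hloc : ∀ t ∈ Set.Ico (0:ℝ) t0, IntervalIntegrable h volume 0 t)
    (hexp : ∀ s ∈ Set.Ico (0:ℝ) t0, Integrable (fun ω => Real.exp (s * F ω)) μ)
    (hexp' : ∀ s ∈ Set.Ico (0:ℝ) t0, Integrable (fun ω => F ω * Real.exp (s * F ω)) μ)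
    (hineq : ∀ s ∈ Set.Ico (0:ℝ) t0,
      ∫ ω, F ω * Real.exp (s * F ω) ∂μ ≤ h s * ∫ ω, Real.exp (s * F ω) ∂μ) :
    ∀ t ∈ Set.Ioo (0:ℝ) t0, ∀ x > (0:ℝ),
      (μ {ω | x ≤ F ω}).toReal ≤ Real.exp (-(t * x) + ∫ s in (0:ℝ)..t, h s) := by
  intro t ht x hx
  obtain ⟨ht0, htt0⟩ := ht
  set L : ℝ → ℝ := fun s => ∫ ω, Real.exp (s * F ω) ∂μ with hL
  set M : ℝ → ℝ := fun s => ∫ ω, F ω * Real.exp (s * F ω) ∂μ with hM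
  have hmeasF : ∀ s : ℝ, AEStronglyMeasurable (fun ω => Real.exp (s * F ω)) μ :=
    fun s => (Real.measurable_exp.comp_aemeasurable
      ((hF.aemeasurable).const_mul s)).aestronglyMeasurable
  have hmeasF' : ∀ s : ℝ, AEStronglyMeasurable (fun ω => F ω * Real.exp (s * F ω)) μ :=
    fun s => hF.aestronglyMeasurable.mul (hmeasF s)
  have htIco : t ∈ Set.Ico (0:ℝ) t0 := ⟨ht0.le, htt0⟩
  have h0Ico : (0:ℝ) ∈ Set.Ico (0:ℝ) t0 := ⟨le_refl _, ht0.trans htt0⟩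
  -- continuity of L on [0, t]
  have contL : ContinuousOn L (Set.Icc 0 t) := by
    apply continuousOn_of_dominated (bound := fun ω => Real.exp (0 * F ω) + Real.exp (t * F ω))
    · exact fun s _ => hmeasF s
    · intro s hs
      filter_upwards with ω
      rw [Real.norm_eq_abs, abs_of_pos (Real.exp_pos _)]
      exact exp_bound_aux hs.1 hs.2
    · exact (hexp 0 h0Ico).add (hexp t htIco)
    · filter_upwards with ω
      exact (Real.continuous_exp.comp (continuous_id.mul continuous_const)).continuousOn
  -- continuity of M on [0, t]
  have contM : ContinuousOn M (Set.Icc 0 t) := by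
    apply continuousOn_of_dominated
      (bound := fun ω => |F ω * Real.exp (0 * F ω)| + |F ω * Real.exp (t * F ω)|)
    · exact fun s _ => hmeasF' s
    · intro s hs
      filter_upwards with ω
      rw [Real.norm_eq_abs, abs_mul, abs_mul, abs_mul, abs_of_pos (Real.exp_pos _),
        abs_of_pos (Real.exp_pos _), abs_of_pos (Real.exp_pos _), ← mul_add]
      exact mul_le_mul_of_nonneg_left (exp_bound_aux hs.1 hs.2) (abs_nonneg _)
    · exact (hexp' 0 h0Ico).abs.add (hexp' t htIco).abs
    · filter_upwards with ω
      exact (continuous_const.mul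
        (Real.continuous_exp.comp (continuous_id.mul continuous_const))).continuousOn
  -- positivity of L
  have Lpos : ∀ s ∈ Set.Ico (0:ℝ) t0, 0 < L s := fun s hs => integral_exp_pos (hexp s hs)
  -- derivative of L
  have derivL : ∀ s ∈ Set.Ioo (0:ℝ) t0, HasDerivAt L (M s) s := by
    intro s hs
    set ε : ℝ := min (s / 2) ((t0 - s) / 2) with hε
    have hε0 : 0 < ε := lt_min (by linarith [hs.1]) (by linarith [hs.2])
    set a : ℝ := s - ε with ha
    set b : ℝ := s + ε with hb
    have haIco : a ∈ Set.Ico (0:ℝ) t0 := by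
      constructor
      · have : ε ≤ s / 2 := min_le_left _ _
        simp only [ha]; linarith [hs.1]
      · have : (0:ℝ) < ε := hε0
        simp only [ha]; linarith [hs.2]
    have hbIco : b ∈ Set.Ico (0:ℝ) t0 := by
      constructor
      · have : (0:ℝ) < ε := hε0
        simp only [hb]; linarith [hs.1]
      · have : ε ≤ (t0 - s) / 2 := min_le_right _ _
        simp only [hb]; linarith
    have := hasDerivAt_integral_of_dominated_loc_of_deriv_le (μ := μ)
      (F := fun s ω => Real.exp (s * F ω))
      (F' := fun s ω => F ω * Real.exp (s * F ω))
      (bound := fun ω => |F ω * Real.exp (a * F ω)| + |F ω * Real.exp (b * F ω)|)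
      (Metric.ball_mem_nhds s hε0) (Eventually.of_forall fun s => hmeasF s)
      (hexp s ⟨hs.1.le, hs.2⟩) (hmeasF' s)
      ?_ ((hexp' a haIco).abs.add (hexp' b hbIco).abs) ?_
    · exact this.2
    · filter_upwards with ω
      intro u hu
      rw [Metric.mem_ball, Real.dist_eq, abs_sub_lt_iff] at hu
      rw [Real.norm_eq_abs, abs_mul, abs_mul, abs_mul, abs_of_pos (Real.exp_pos _),
        abs_of_pos (Real.exp_pos _), abs_of_pos (Real.exp_pos _), ← mul_add]
      exact mul_le_mul_of_nonneg_left
        (exp_bound_aux (by simp only [ha]; linarith [hu.2]) (by simp only [hb]; linarith [hu.1]))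
        (abs_nonneg _)
    · filter_upwards with ω
      intro u _
      have h1 : HasDerivAt (fun v : ℝ => v * F ω) (F ω) u := hasDerivAt_mul_const (F ω)
      have := h1.exp
      rwa [mul_comm] at this
  -- FTC for log L
  set φ : ℝ → ℝ := fun s => Real.log (L s) with hφ
  have contφ : ContinuousOn φ (Set.Icc 0 t) :=
    ContinuousOn.log contL fun s hs => (Lpos s ⟨hs.1, hs.2.trans_lt htt0⟩).ne'
  have derivφ : ∀ s ∈ Set.Ioo (0:ℝ) t, HasDerivWithinAt φ (M s / L s) (Set.Ioi s) s := by
    intro s hs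
    have hsI : s ∈ Set.Ioo (0:ℝ) t0 := ⟨hs.1, hs.2.trans htt0⟩
    exact ((derivL s hsI).log (Lpos s ⟨hsI.1.le, hsI.2⟩).ne').hasDerivWithinAt
  have intML : IntervalIntegrable (fun s => M s / L s) volume 0 t := by
    apply ContinuousOn.intervalIntegrable
    rw [Set.uIcc_of_le ht0.le]
    exact contM.div contL fun s hs => (Lpos s ⟨hs.1, hs.2.trans_lt htt0⟩).ne'
  have ftc : ∫ s in (0:ℝ)..t, M s / L s = φ t - φ 0 :=
    intervalIntegral.integral_eq_sub_of_hasDeriv_right_of_le ht0.le contφ derivφ intML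
  have hL0 : L 0 = 1 := by
    simp [hL]
  have hφ0 : φ 0 = 0 := by simp [hφ, hL0]
  -- compare with ∫ h
  have hmono : ∫ s in (0:ℝ)..t, M s / L s ≤ ∫ s in (0:ℝ)..t, h s := by
    apply intervalIntegral.integral_mono_on ht0.le intML (hloc t htIco)
    intro s hs
    have hsI : s ∈ Set.Ico (0:ℝ) t0 := ⟨hs.1, hs.2.trans_lt htt0⟩
    rw [div_le_iff₀ (Lpos s hsI)]
    exact hineq s hsI
  have hlogL : φ t ≤ ∫ s in (0:ℝ)..t, h s := by
    have := ftc
    linarith [hmono]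
  have hLt : L t ≤ Real.exp (∫ s in (0:ℝ)..t, h s) :=
    (Real.log_le_iff_le_exp (Lpos t htIco)).1 hlogL
  -- Markov
  have markov := mul_meas_ge_le_integral_of_nonneg
    (μ := μ) (f := fun ω => Real.exp (t * F ω))
    (Eventually.of_forall fun ω => (Real.exp_pos _).le) (hexp t htIco) (Real.exp (t * x))
  have hset : {ω | Real.exp (t * x) ≤ Real.exp (t * F ω)} = {ω | x ≤ F ω} := by
    ext ω
    simp only [Set.mem_setOf_eq, Real.exp_le_exp]
    exact mul_le_mul_iff_right₀ ht0
  rw [hset] at markov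
  have hkey : Real.exp (t * x) * (μ {ω | x ≤ F ω}).toReal ≤ Real.exp (∫ s in (0:ℝ)..t, h s) :=
    markov.trans hLt
  rw [Real.exp_add, Real.exp_neg]
  rw [← le_div_iff₀' (Real.exp_pos _)] at hkey
  rwa [div_eq_mul_inv, mul_comm] at hkey
end

section
/- For all real numbers $0<u<v$ and all $x>0$, $\dfrac{e^{ux}-1}{e^{vx}-1} \le \dfrac{u}{v}\, e^{(u-v)x/2}$. -/
open Real Set

private lemma sinh_le_mul_cosh {s : ℝ} (hs : 0 ≤ s) : Real.sinh s ≤ s * Real.cosh s := by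
  have h : MonotoneOn (fun t : ℝ => t * Real.cosh t - Real.sinh t) (Ici 0) := by
    apply monotoneOn_of_deriv_nonneg (convex_Ici 0)
    · exact ((continuous_id.mul Real.continuous_cosh).sub Real.continuous_sinh).continuousOn
    · intro t ht
      exact ((differentiable_id.mul Real.differentiable_cosh).sub
        Real.differentiable_sinh).differentiableAt.differentiableWithinAt
    · intro t ht
      rw [interior_Ici, mem_Ioi] at ht
      have hd : HasDerivAt (fun t : ℝ => t * Real.cosh t - Real.sinh t) (t * Real.sinh t) t := by
        have h1 : HasDerivAt (fun t : ℝ => t * Real.cosh t)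
            (1 * Real.cosh t + t * Real.sinh t) t :=
          (hasDerivAt_id t).mul (Real.hasDerivAt_cosh t)
        have := h1.sub (Real.hasDerivAt_sinh t)
        exact this.congr_deriv (by ring)
      rw [hd.deriv]
      exact mul_nonneg ht.le (Real.sinh_nonneg_iff.2 ht.le)
  have := h (self_mem_Ici (a := (0:ℝ))) (mem_Ici.2 hs) hs
  simp only [Real.cosh_zero, Real.sinh_zero, zero_mul, sub_zero, mul_zero] at this
  linarith

private lemma key_sinh {u v b : ℝ} (hu : 0 < u) (huv : u < v) (hb : 0 < b) :
    v * Real.sinh (u * b) ≤ u * Real.sinh (v * b) := by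
  have h : MonotoneOn (fun t : ℝ => Real.sinh (t * b) / t) (Ioi 0) := by
    apply monotoneOn_of_deriv_nonneg (convex_Ioi 0)
    · apply ContinuousOn.div
      · exact (Real.continuous_sinh.comp (continuous_id.mul continuous_const)).continuousOn
      · exact continuous_id.continuousOn
      · intro t ht; exact ne_of_gt ht
    · intro t ht
      rw [interior_Ioi, mem_Ioi] at ht
      exact (((Real.differentiable_sinh.comp (differentiable_id.mul
        (differentiable_const b))).differentiableAt).div differentiableAt_id
        (ne_of_gt ht)).differentiableWithinAt
    · intro t ht
      rw [interior_Ioi, mem_Ioi] at ht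
      have hd : HasDerivAt (fun t : ℝ => Real.sinh (t * b))
          (Real.cosh (t * b) * b) t := by
        have := (Real.hasDerivAt_sinh (t * b)).comp t
          ((hasDerivAt_id t).mul_const b)
        simp at this; exact this
      have hq : HasDerivAt (fun t : ℝ => Real.sinh (t * b) / t)
          ((Real.cosh (t * b) * b * t - Real.sinh (t * b) * 1) / t ^ 2) t :=
        hd.div (hasDerivAt_id t) (ne_of_gt ht)
      rw [hq.deriv]
      apply div_nonneg _ (sq_nonneg t)
      have := sinh_le_mul_cosh (mul_nonneg ht.le hb.le)
      nlinarith
  have h2 := h (mem_Ioi.2 hu) (mem_Ioi.2 (hu.trans huv)) huv.le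
  have hv : 0 < v := hu.trans huv
  rw [div_le_div_iff₀ hu hv] at h2
  linarith [h2]

/-- Elementary exponential inequality. -/
theorem stmt3 (u v x : ℝ) (hu : 0 < u) (huv : u < v) (hx : 0 < x) :
    (Real.exp (u * x) - 1) / (Real.exp (v * x) - 1)
      ≤ u / v * Real.exp ((u - v) * x / 2) := by
  have hv : 0 < v := hu.trans huv
  have hrw : ∀ t : ℝ, Real.exp (t * x) - 1
      = Real.exp (t * x / 2) * (2 * Real.sinh (t * (x / 2))) := by
    intro t
    have h1 : Real.exp (t * x / 2) * Real.exp (t * (x / 2)) = Real.exp (t * x) := by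
      rw [← Real.exp_add]; ring_nf
    have h2 : Real.exp (t * x / 2) * Real.exp (-(t * (x / 2))) = 1 := by
      rw [← Real.exp_add]; ring_nf; exact Real.exp_zero
    rw [Real.sinh_eq, mul_comm (2:ℝ), div_mul_cancel₀ _ (two_ne_zero), mul_sub]
    linarith
  rw [hrw u, hrw v]
  have hSu : 0 < Real.sinh (u * (x / 2)) :=
    Real.sinh_pos_iff.2 (by positivity)
  have hSv : 0 < Real.sinh (v * (x / 2)) :=
    Real.sinh_pos_iff.2 (by positivity)
  have hEu : (0:ℝ) < Real.exp (u * x / 2) := Real.exp_pos _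
  have hEv : (0:ℝ) < Real.exp (v * x / 2) := Real.exp_pos _
  have hexp : Real.exp ((u - v) * x / 2) = Real.exp (u * x / 2) / Real.exp (v * x / 2) := by
    rw [← Real.exp_sub]; ring_nf
  rw [hexp, div_mul_div_comm, div_le_div_iff₀ (by positivity) (by positivity)]
  have key := key_sinh hu huv (half_pos hx)
  nlinarith [mul_le_mul_of_nonneg_left key (by positivity : (0:ℝ) ≤ 2 * Real.exp (u * x / 2) * Real.exp (v * x / 2))]
end

section
/- Let $a>0$ and $V>0$. For all $x>0$: $-\frac{x}{a}+\frac{2V}{a^2}\log\left(1+\frac{a x}{2V}\right) \le -\left(1-\frac{\log 3}{2}\right)\min\left(\frac{x}{a},\frac{x^2}{4V}\right)$. -/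
lemma log3_gt_one : 1 < Real.log 3 := by
  rw [Real.lt_log_iff_exp_lt (by norm_num : (0:ℝ) < 3)]
  calc Real.exp 1 < 2.7182818286 := Real.exp_one_lt_d9
    _ < 3 := by norm_num

lemma log3_lt : Real.log 3 < 4 / 3 := by
  rw [Real.log_lt_iff_lt_exp (by norm_num : (0:ℝ) < 3)]
  have h1 : Real.exp (4/3 : ℝ) = Real.exp 1 * Real.exp (1/3) := by
    rw [← Real.exp_add]; norm_num
  have h2 : (1:ℝ)/3 + 1 ≤ Real.exp (1/3) := Real.add_one_le_exp (1/3 : ℝ)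
  have h3 : (2.7182818283 : ℝ) < Real.exp 1 := Real.exp_one_gt_d9
  nlinarith [Real.exp_pos (1/3 : ℝ)]

lemma key_ineq (u : ℝ) (hu : 0 < u) :
    (1 - Real.log 3 / 2) * min u (u ^ 2 / 2) ≤ u - Real.log (1 + u) := by
  have hlog1 := log3_gt_one
  have hlog2 := log3_lt
  obtain ⟨c, hc⟩ : ∃ c : ℝ, c = 1 - Real.log 3 / 2 := ⟨_, rfl⟩
  rw [← hc]
  have hc3 : 1/3 < c := by rw [hc]; linarith
  have hc0 : 0 < c := by linarith
  have hc1 : c < 1/2 := by rw [hc]; linarith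
  rcases le_total u 2 with h2 | h2
  · -- small u : min = u^2/2
    have hmin : min u (u ^ 2 / 2) = u ^ 2 / 2 := min_eq_right (by nlinarith)
    rw [hmin]
    set g : ℝ → ℝ := fun t => t - Real.log (1 + t) - c * t ^ 2 / 2 with hg
    have hderiv : ∀ t : ℝ, 0 ≤ t → HasDerivAt g (t * (1 / (1 + t) - c)) t := by
      intro t ht
      have h1 : (0:ℝ) < 1 + t := by linarith
      have hl : HasDerivAt (fun s : ℝ => Real.log (1 + s)) (1 / (1 + t)) t := by
        have := ((hasDerivAt_id t).const_add 1).log h1.ne'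
        simpa using this
      have hq : HasDerivAt (fun s : ℝ => c * s ^ 2 / 2) (c * (2 * t) / 2) t := by
        have := ((hasDerivAt_pow 2 t).const_mul c).div_const 2
        simpa using this
      have := ((hasDerivAt_id t).sub hl).sub hq
      refine this.congr_deriv ?_
      field_simp
      ring
    obtain ⟨u₀, hu₀def⟩ : ∃ v : ℝ, v = 1 / c - 1 := ⟨_, rfl⟩
    have hcinv2 : 2 < 1 / c := by rw [lt_div_iff₀ hc0]; linarith
    have hcinv3 : 1 / c < 3 := by rw [div_lt_iff₀ hc0]; linarith
    have hu₀ : 0 < u₀ := by rw [hu₀def]; linarith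
    have hu₀2 : u₀ < 2 := by rw [hu₀def]; linarith
    have hcc : c * (1 / c) = 1 := mul_one_div_cancel hc0.ne'
    have hmono : MonotoneOn g (Set.Icc 0 u₀) := by
      apply monotoneOn_of_deriv_nonneg (convex_Icc _ _)
      · exact fun t ht => (hderiv t ht.1).continuousAt.continuousWithinAt
      · intro t ht
        rw [interior_Icc] at ht
        exact (hderiv t ht.1.le).differentiableAt.differentiableWithinAt
      · intro t ht
        rw [interior_Icc] at ht
        rw [(hderiv t ht.1.le).deriv]
        have h1t : (0:ℝ) < 1 + t := by linarith [ht.1]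
        have hle : c ≤ 1 / (1 + t) := by
          rw [le_div_iff₀ h1t]
          nlinarith [ht.2.le, hu₀def.le, hu₀def.ge, hcc]
        exact mul_nonneg ht.1.le (by linarith)
    have hanti : AntitoneOn g (Set.Icc u₀ 2) := by
      apply antitoneOn_of_deriv_nonpos (convex_Icc _ _)
      · exact fun t ht => (hderiv t (by linarith [ht.1])).continuousAt.continuousWithinAt
      · intro t ht
        rw [interior_Icc] at ht
        exact (hderiv t (by linarith [ht.1])).differentiableAt.differentiableWithinAt
      · intro t ht
        rw [interior_Icc] at ht
        rw [(hderiv t (by linarith [ht.1])).deriv]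
        have h1t : (0:ℝ) < 1 + t := by linarith [ht.1]
        have hle : 1 / (1 + t) ≤ c := by
          rw [div_le_iff₀ h1t]
          nlinarith [ht.1.le, hu₀def.le, hu₀def.ge, hcc]
        have ht0 : 0 ≤ t := by linarith [ht.1]
        nlinarith
    have hg0 : g 0 = 0 := by simp [hg]
    have hg2 : g 2 = 0 := by
      show (2:ℝ) - Real.log (1 + 2) - c * 2 ^ 2 / 2 = 0
      rw [show (1:ℝ) + 2 = 3 by norm_num, hc]
      ring
    have hring : c * (u ^ 2 / 2) = c * u ^ 2 / 2 := by ring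
    rcases le_total u u₀ with hle | hle
    · have := hmono (Set.mem_Icc.mpr ⟨le_refl 0, hu₀.le⟩)
        (Set.mem_Icc.mpr ⟨hu.le, hle⟩) hu.le
      rw [hg0] at this
      have hgu : (0:ℝ) ≤ u - Real.log (1 + u) - c * u ^ 2 / 2 := this
      linarith
    · have := hanti (Set.mem_Icc.mpr ⟨hle, h2⟩)
        (Set.mem_Icc.mpr ⟨hu₀2.le, le_refl 2⟩) h2
      rw [hg2] at this
      have hgu : (0:ℝ) ≤ u - Real.log (1 + u) - c * u ^ 2 / 2 := this
      linarith
  · -- large u : min = u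
    have hmin : min u (u ^ 2 / 2) = u := min_eq_left (by nlinarith)
    rw [hmin]
    set h : ℝ → ℝ := fun t => (1 - c) * t - Real.log (1 + t) with hh
    have hderiv : ∀ t : ℝ, 0 ≤ t → HasDerivAt h ((1 - c) - 1 / (1 + t)) t := by
      intro t ht
      have h1 : (0:ℝ) < 1 + t := by linarith
      have hl : HasDerivAt (fun s : ℝ => Real.log (1 + s)) (1 / (1 + t)) t := by
        have := ((hasDerivAt_id t).const_add 1).log h1.ne'
        simpa using this
      have := ((hasDerivAt_id t).const_mul (1 - c)).sub hl
      exact this.congr_deriv (by ring)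
    have hmono : MonotoneOn h (Set.Ici 2) := by
      apply monotoneOn_of_deriv_nonneg (convex_Ici _)
      · exact fun t ht => (hderiv t (by linarith [Set.mem_Ici.mp ht])).continuousAt.continuousWithinAt
      · intro t ht
        rw [interior_Ici] at ht
        exact (hderiv t (by linarith [Set.mem_Ioi.mp ht])).differentiableAt.differentiableWithinAt
      · intro t ht
        rw [interior_Ici] at ht
        have ht2 : (2:ℝ) < t := Set.mem_Ioi.mp ht
        rw [(hderiv t (by linarith)).deriv]
        have h1t : (0:ℝ) < 1 + t := by linarith
        have : 1 / (1 + t) ≤ 1 / 3 := by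
          apply one_div_le_one_div_of_le <;> linarith
        have h1c : 1 - c = Real.log 3 / 2 := by rw [hc]; ring
        linarith
    have hh2 : h 2 = 0 := by
      show (1 - c) * 2 - Real.log (1 + 2) = 0
      rw [show (1:ℝ) + 2 = 3 by norm_num, hc]
      ring
    have := hmono (Set.mem_Ici.mpr (le_refl 2)) (Set.mem_Ici.mpr h2) h2
    rw [hh2] at this
    have hgu : (0:ℝ) ≤ (1 - c) * u - Real.log (1 + u) := this
    have hring : (1 - c) * u = u - c * u := by ring
    linarith

/-- Comparison of the Bennett-type exponent to a Bernstein-type exponent. -/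
theorem stmt7 (a V x : ℝ) (ha : 0 < a) (hV : 0 < V) (hx : 0 < x) :
    -(x / a) + 2 * V / a ^ 2 * Real.log (1 + a * x / (2 * V))
      ≤ -((1 - Real.log 3 / 2) * min (x / a) (x ^ 2 / (4 * V))) := by
  set u : ℝ := a * x / (2 * V) with hu
  have hu0 : 0 < u := by positivity
  set k : ℝ := 2 * V / a ^ 2 with hk
  have hk0 : 0 < k := by positivity
  have e1 : x / a = k * u := by
    rw [hk, hu]; field_simp
  have e2 : x ^ 2 / (4 * V) = k * (u ^ 2 / 2) := by
    rw [hk, hu]; field_simp; ring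
  have e3 : min (x / a) (x ^ 2 / (4 * V)) = k * min u (u ^ 2 / 2) := by
    rw [e1, e2]
    rcases le_total u (u ^ 2 / 2) with hle | hle
    · rw [min_eq_left hle, min_eq_left (by nlinarith)]
    · rw [min_eq_right hle, min_eq_right (by nlinarith)]
  have hkey := key_ineq u hu0
  have hmul := mul_le_mul_of_nonneg_left hkey hk0.le
  rw [e3, e1]
  nlinarith [hmul]
end

section
/- Let $T>0$ and let $\nu$ be the measure on $\mathbb{R}\setminus\{0\}$ with density $y\mapsto \frac{1}{2y\sinh(\pi y/T)}$. Then $\nu([x,\infty)) = \int_x^\infty \frac{dy}{2y\sinh(\pi y/T)} \sim \frac{T e^{-\pi x/T}}{\pi x}$ as $x\to\infty$. -/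
open MeasureTheory Real Filter Set

lemma int_exp_Ioi (a x : ℝ) (ha : 0 < a) :
    ∫ y in Set.Ioi x, Real.exp (-(a * y)) = Real.exp (-(a * x)) / a := by
  have hderiv : ∀ y ∈ Set.Ici x, HasDerivAt (fun y => -Real.exp (-(a * y)) / a)
      (Real.exp (-(a * y))) y := by
    intro y _
    have h1 : HasDerivAt (fun y : ℝ => -(a * y)) (-a) y := by
      simpa using ((hasDerivAt_id y).const_mul (-a))
    have h2 := (Real.hasDerivAt_exp (-(a * y))).comp y h1
    have h3 := (h2.neg).div_const a
    convert h3 using 1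
    · rfl
    · rfl
    · rfl
    · rw [eq_div_iff ha.ne']; ring
  have hint : IntegrableOn (fun y => Real.exp (-(a * y))) (Set.Ioi x) := by
    simpa [neg_mul] using exp_neg_integrableOn_Ioi x ha
  have htend : Tendsto (fun y => -Real.exp (-(a * y)) / a) atTop (nhds 0) := by
    have : Tendsto (fun y : ℝ => -(a * y)) atTop atBot := by
      exact tendsto_neg_atTop_atBot.comp ((tendsto_const_mul_atTop_of_pos ha).mpr tendsto_id)
    have := (Real.tendsto_exp_atBot.comp this).neg.div_const a
    simpa using this
  have := MeasureTheory.integral_Ioi_of_hasDerivAt_of_tendsto' hderiv hint htend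
  rw [this]; ring

lemma key (a : ℝ) (ha : 0 < a) :
    Tendsto (fun x : ℝ =>
        a * x * Real.exp (a * x) * ∫ y in Set.Ioi x, 1 / (2 * y * Real.sinh (a * y)))
      atTop (nhds 1) := by
  have hexpint : ∀ x : ℝ, IntegrableOn (fun y => Real.exp (-(a * y))) (Set.Ioi x) := by
    intro x; simpa [neg_mul] using exp_neg_integrableOn_Ioi x ha
  -- pointwise bounds
  have hk : ∀ x : ℝ, 0 < x → Real.exp (-(2 * a * x)) < 1 := by
    intro x hx; rw [Real.exp_lt_one_iff]; nlinarith
  have hbound : ∀ x : ℝ, 0 < x → ∀ y ∈ Set.Ioi x,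
      1 / (2 * y * Real.sinh (a * y))
        ≤ 1 / (x * (1 - Real.exp (-(2 * a * x)))) * Real.exp (-(a * y)) := by
    intro x hx y hy
    have hy' : x < y := hy
    have hy0 : 0 < y := hx.trans hy'
    have hk' := hk x hx
    have h1 : Real.exp (-(a * y)) ≤ Real.exp (a * y) * Real.exp (-(2 * a * x)) := by
      rw [← Real.exp_add]
      exact Real.exp_le_exp.mpr (by nlinarith)
    have hs : Real.exp (a * y) * (1 - Real.exp (-(2 * a * x))) ≤ 2 * Real.sinh (a * y) := by
      rw [Real.sinh_eq]; nlinarith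
    have h1k : 0 < 1 - Real.exp (-(2 * a * x)) := by linarith
    have hBpos : 0 < x * (1 - Real.exp (-(2 * a * x))) * Real.exp (a * y) :=
      mul_pos (mul_pos hx h1k) (Real.exp_pos _)
    have hden : x * (1 - Real.exp (-(2 * a * x))) * Real.exp (a * y)
        ≤ 2 * y * Real.sinh (a * y) := by
      have he := Real.exp_pos (a * y)
      nlinarith [mul_le_mul_of_nonneg_left hs hy0.le,
        mul_le_mul_of_nonneg_right hy'.le (le_of_lt (mul_pos (Real.exp_pos (a*y)) h1k))]
    have := one_div_le_one_div_of_le hBpos hden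
    calc 1 / (2 * y * Real.sinh (a * y))
        ≤ 1 / (x * (1 - Real.exp (-(2 * a * x))) * Real.exp (a * y)) := this
      _ = 1 / (x * (1 - Real.exp (-(2 * a * x)))) * Real.exp (-(a * y)) := by
          rw [Real.exp_neg (a * y)]
          have he : Real.exp (a * y) ≠ 0 := (Real.exp_pos _).ne'
          have hB : x * (1 - Real.exp (-(2 * a * x))) ≠ 0 := (mul_pos hx h1k).ne'
          field_simp
  have hpos : ∀ x : ℝ, 0 < x → ∀ y ∈ Set.Ioi x, 0 < 1 / (2 * y * Real.sinh (a * y)) := by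
    intro x hx y hy
    have hy0 : 0 < y := hx.trans hy
    have : 0 < Real.sinh (a * y) := Real.sinh_pos_iff.mpr (by positivity)
    positivity
  have hcont : ∀ x : ℝ, 0 < x → ContinuousOn (fun y => 1 / (2 * y * Real.sinh (a * y)))
      (Set.Ioi x) := by
    intro x hx
    apply ContinuousOn.div continuousOn_const
    · fun_prop
    · intro y hy
      have hy0 : 0 < y := hx.trans hy
      have : 0 < Real.sinh (a * y) := Real.sinh_pos_iff.mpr (by positivity)
      positivity
  have hint : ∀ x : ℝ, 0 < x →
      IntegrableOn (fun y => 1 / (2 * y * Real.sinh (a * y))) (Set.Ioi x) := by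
    intro x hx
    apply Integrable.mono' ((hexpint x).const_mul (1 / (x * (1 - Real.exp (-(2 * a * x))))))
    · exact ((hcont x hx).aestronglyMeasurable measurableSet_Ioi)
    · filter_upwards [ae_restrict_mem measurableSet_Ioi] with y hy
      rw [Real.norm_eq_abs, abs_of_pos (hpos x hx y hy)]
      exact hbound x hx y hy
  -- upper bound on the integral
  have hup : ∀ x : ℝ, 0 < x →
      (∫ y in Set.Ioi x, 1 / (2 * y * Real.sinh (a * y)))
        ≤ 1 / (x * (1 - Real.exp (-(2 * a * x)))) * (Real.exp (-(a * x)) / a) := by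
    intro x hx
    have h1 : (∫ y in Set.Ioi x, 1 / (2 * y * Real.sinh (a * y)))
        ≤ ∫ y in Set.Ioi x, 1 / (x * (1 - Real.exp (-(2 * a * x)))) * Real.exp (-(a * y)) :=
      setIntegral_mono_on (hint x hx) ((hexpint x).const_mul _) measurableSet_Ioi (hbound x hx)
    rwa [MeasureTheory.integral_const_mul, int_exp_Ioi a x ha] at h1
  -- lower bound on the integral
  have hlow : ∀ x : ℝ, 0 < x →
      1 / (x + Real.sqrt x) * (Real.exp (-(a * x)) / a
          - Real.exp (-(a * (x + Real.sqrt x))) / a)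
        ≤ ∫ y in Set.Ioi x, 1 / (2 * y * Real.sinh (a * y)) := by
    intro x hx
    set b := x + Real.sqrt x with hb
    have hsx : 0 < Real.sqrt x := Real.sqrt_pos.mpr hx
    have hxb : x < b := by rw [hb]; linarith
    have hb0 : 0 < b := by linarith
    have hsplit : (∫ y in Set.Ioc x b, Real.exp (-(a * y)))
        = Real.exp (-(a * x)) / a - Real.exp (-(a * b)) / a := by
      have hdisj : Disjoint (Set.Ioc x b) (Set.Ioi b) := Set.Ioc_disjoint_Ioi le_rfl
      have hunion : Set.Ioc x b ∪ Set.Ioi b = Set.Ioi x := Set.Ioc_union_Ioi_eq_Ioi hxb.le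
      have h := MeasureTheory.setIntegral_union hdisj measurableSet_Ioi
        ((hexpint x).mono_set Set.Ioc_subset_Ioi_self) (hexpint b)
        (f := fun y => Real.exp (-(a * y))) (μ := volume)
      rw [hunion, int_exp_Ioi a x ha, int_exp_Ioi a b ha] at h
      linarith
    have hpb : ∀ y ∈ Set.Ioc x b,
        1 / b * Real.exp (-(a * y)) ≤ 1 / (2 * y * Real.sinh (a * y)) := by
      intro y hy
      have hy0 : 0 < y := hx.trans hy.1
      have hsy : 0 < Real.sinh (a * y) := Real.sinh_pos_iff.mpr (by positivity)
      have h2s : 2 * Real.sinh (a * y) ≤ Real.exp (a * y) := by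
        rw [Real.sinh_eq]; have := Real.exp_pos (-(a * y)); linarith
      have hd : 2 * y * Real.sinh (a * y) ≤ b * Real.exp (a * y) := by
        nlinarith [hy.2, Real.exp_pos (a * y)]
      have hApos : 0 < 2 * y * Real.sinh (a * y) := by positivity
      have h5 := one_div_le_one_div_of_le hApos hd
      calc 1 / b * Real.exp (-(a * y)) = 1 / (b * Real.exp (a * y)) := by
            rw [Real.exp_neg (a * y)]
            have he : Real.exp (a * y) ≠ 0 := (Real.exp_pos _).ne'
            field_simp
        _ ≤ _ := h5
    have h2 : (∫ y in Set.Ioc x b, 1 / b * Real.exp (-(a * y)))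
        ≤ ∫ y in Set.Ioc x b, 1 / (2 * y * Real.sinh (a * y)) :=
      setIntegral_mono_on (((hexpint x).mono_set Set.Ioc_subset_Ioi_self).const_mul _)
        ((hint x hx).mono_set Set.Ioc_subset_Ioi_self) measurableSet_Ioc hpb
    have h3 : (∫ y in Set.Ioc x b, 1 / (2 * y * Real.sinh (a * y)))
        ≤ ∫ y in Set.Ioi x, 1 / (2 * y * Real.sinh (a * y)) := by
      apply setIntegral_mono_set (hint x hx)
      · filter_upwards [ae_restrict_mem measurableSet_Ioi] with y hy using (hpos x hx y hy).le
      · exact HasSubset.Subset.eventuallyLE Set.Ioc_subset_Ioi_self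
    rw [MeasureTheory.integral_const_mul, hsplit] at h2
    linarith
  -- limits
  have hsqrt : Tendsto Real.sqrt atTop atTop := by
    rw [tendsto_atTop_atTop]
    intro b
    refine ⟨b ^ 2, fun x hx => ?_⟩
    nlinarith [Real.sq_sqrt ((sq_nonneg b).trans hx), Real.sqrt_nonneg x]
  have hUlim : Tendsto (fun x : ℝ => 1 / (1 - Real.exp (-(2 * a * x)))) atTop (nhds 1) := by
    have h0 : Tendsto (fun x : ℝ => Real.exp (-(2 * a * x))) atTop (nhds 0) :=
      Real.tendsto_exp_atBot.comp (tendsto_neg_atTop_atBot.comp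
        ((tendsto_const_mul_atTop_of_pos (by positivity)).mpr tendsto_id))
    have h1 := (tendsto_const_nhds.sub h0).inv₀ (by norm_num : (1:ℝ) - 0 ≠ 0)
    simpa [one_div] using h1
  have hLlim : Tendsto (fun x : ℝ =>
      x * (1 - Real.exp (-(a * Real.sqrt x))) / (x + Real.sqrt x)) atTop (nhds 1) := by
    have h0 : Tendsto (fun x : ℝ => Real.exp (-(a * Real.sqrt x))) atTop (nhds 0) :=
      Real.tendsto_exp_atBot.comp (tendsto_neg_atTop_atBot.comp
        ((tendsto_const_mul_atTop_of_pos ha).mpr hsqrt))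
    have h1 : Tendsto (fun x : ℝ => 1 - Real.exp (-(a * Real.sqrt x))) atTop (nhds 1) := by
      simpa using tendsto_const_nhds.sub h0
    have h2 : Tendsto (fun x : ℝ => x / (x + Real.sqrt x)) atTop (nhds 1) := by
      have hinv : Tendsto (fun x : ℝ => (Real.sqrt x)⁻¹) atTop (nhds 0) :=
        tendsto_inv_atTop_zero.comp hsqrt
      have h3 := (tendsto_const_nhds.add hinv).inv₀ (by norm_num : (1:ℝ) + 0 ≠ 0)
      have h4 : Tendsto (fun x : ℝ => 1 / (1 + (Real.sqrt x)⁻¹)) atTop (nhds 1) := by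
        simpa [one_div] using h3
      apply h4.congr'
      filter_upwards [eventually_ge_atTop (1 : ℝ)] with x hx
      have hx0 : 0 < x := by linarith
      have hs : 0 < Real.sqrt x := Real.sqrt_pos.mpr hx0
      have hss : Real.sqrt x * Real.sqrt x = x := Real.mul_self_sqrt hx0.le
      have hxs : x + Real.sqrt x ≠ 0 := by positivity
      field_simp
      nlinarith [hss]
    have := h1.mul h2
    rw [one_mul] at this
    apply this.congr
    intro x
    ring
  -- squeeze
  apply tendsto_of_tendsto_of_tendsto_of_le_of_le' hLlim hUlim
  · filter_upwards [eventually_ge_atTop (1 : ℝ)] with x hx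
    have hx0 : 0 < x := by linarith
    have h := hlow x hx0
    have hcoef : (0:ℝ) ≤ a * x * Real.exp (a * x) := by positivity
    have h2 := mul_le_mul_of_nonneg_left h hcoef
    refine le_trans (le_of_eq ?_) h2
    have hs : 0 < Real.sqrt x := Real.sqrt_pos.mpr hx0
    have hxs : x + Real.sqrt x ≠ 0 := by positivity
    have he1 : Real.exp (-(a * (x + Real.sqrt x)))
        = Real.exp (-(a * x)) * Real.exp (-(a * Real.sqrt x)) := by
      rw [← Real.exp_add]; ring_nf
    have he2 : Real.exp (a * x) * Real.exp (-(a * x)) = 1 := by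
      rw [← Real.exp_add]; simp
    rw [he1]
    rw [Real.exp_neg (a * x)]
    field_simp
  · filter_upwards [eventually_ge_atTop (1 : ℝ)] with x hx
    have hx0 : 0 < x := by linarith
    have h := hup x hx0
    have hcoef : (0:ℝ) ≤ a * x * Real.exp (a * x) := by positivity
    have h2 := mul_le_mul_of_nonneg_left h hcoef
    refine le_trans h2 (le_of_eq ?_)
    have hk' := hk x hx0
    have h1k : (1:ℝ) - Real.exp (-(2 * a * x)) ≠ 0 := by linarith
    have he2 : Real.exp (a * x) * Real.exp (-(a * x)) = 1 := by
      rw [← Real.exp_add]; simp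
    rw [Real.exp_neg (a * x)]
    field_simp

/-- Tail asymptotics of the Lévy measure of Lévy's stochastic area on `[0,T]`. -/
theorem stmt9 (T : ℝ) (hT : 0 < T) :
    Tendsto (fun x : ℝ =>
        Real.pi * x * Real.exp (Real.pi * x / T) / T
          * ∫ y in Set.Ioi x, 1 / (2 * y * Real.sinh (Real.pi * y / T)))
      atTop (nhds 1) := by
  have h := key (Real.pi / T) (div_pos Real.pi_pos hT)
  refine Tendsto.congr (fun x => ?_) h
  simp_rw [show ∀ y : ℝ, Real.pi / T * y = Real.pi * y / T from
    fun y => (mul_div_right_comm _ _ _).symm]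
  ring
end
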